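/- Let L and Q be Laurent polynomials over ℂ such that ∮_{S^1} L(z)^i Q'(z) dz = 0 for all integers i ≥ 0. Then for every polynomial R ∈ ℂ[z], the Laurent polynomial Q̂ = (R ∘ L) · Q (the product of R evaluated at L with Q) also satisfies ∮_{S^1} L(z)^i Q̂'(z) dz = 0 for all integers i ≥ 0. -/

import Mathlib

/-- Evaluation of a Laurent polynomial at a complex number (using `zpow`;
on `ℂ \ {0}` this is the usual analytic function `z ↦ Σ c_k z^k`). -/
noncomputable def lpEval (p : LaurentPolynomial ℂ) (z : ℂ) : ℂ :=
  Finsupp.sum (AddMonoidAlgebra.coeff p) fun k c => c * z ^ k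

noncomputable def lpD (p : LaurentPolynomial ℂ) (z : ℂ) : ℂ :=
  Finsupp.sum (AddMonoidAlgebra.coeff p) fun k c => c * ((k : ℂ) * z ^ (k - 1))

lemma hasDerivAt_lpEval (p : LaurentPolynomial ℂ) {z : ℂ} (hz : z ≠ 0) :
    HasDerivAt (lpEval p) (lpD p z) z := by
  have h : HasDerivAt (fun w => ∑ k ∈ p.coeff.support, p.coeff k * w ^ k)
      (∑ k ∈ p.coeff.support, p.coeff k * ((k : ℂ) * z ^ (k - 1))) z := by
    apply HasDerivAt.fun_sum
    intro k _
    exact (hasDerivAt_zpow k z (Or.inl hz)).const_mul _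
  exact h

lemma lpEval_mul {z : ℂ} (hz : z ≠ 0) (p q : LaurentPolynomial ℂ) :
    lpEval (p * q) z = lpEval p z * lpEval q z := by
  let φ : Multiplicative ℤ →* ℂ :=
    { toFun := fun k => z ^ (Multiplicative.toAdd k)
      map_one' := by simp
      map_mul' := fun a b => by
        simp [zpow_add₀ hz] }
  have key : ∀ r : LaurentPolynomial ℂ,
      lpEval r z = AddMonoidAlgebra.lift ℂ ℂ ℤ φ r := by
    intro r
    rw [AddMonoidAlgebra.lift_apply]
    rfl
  rw [key, key, key, map_mul]

lemma lpEval_add (p q : LaurentPolynomial ℂ) (z : ℂ) :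
    lpEval (p + q) z = lpEval p z + lpEval q z := by
  unfold lpEval
  apply Finsupp.sum_add_index' <;> intros <;> ring

lemma lpD_add (p q : LaurentPolynomial ℂ) (z : ℂ) :
    lpD (p + q) z = lpD p z + lpD q z := by
  unfold lpD
  apply Finsupp.sum_add_index' <;> intros <;> ring

lemma lpD_smul (a : ℂ) (p : LaurentPolynomial ℂ) (z : ℂ) :
    lpD (a • p) z = a * lpD p z := by
  unfold lpD
  rw [AddMonoidAlgebra.coeff_smul, Finsupp.sum_smul_index (by intros; ring), Finsupp.mul_sum]
  congr 1; ext k c; ring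

lemma lpD_mul {z : ℂ} (hz : z ≠ 0) (p q : LaurentPolynomial ℂ) :
    lpD (p * q) z = lpEval p z * lpD q z + lpD p z * lpEval q z := by
  have h1 : HasDerivAt (lpEval (p * q)) (lpD (p * q) z) z := hasDerivAt_lpEval _ hz
  have h2 : HasDerivAt (lpEval (p * q))
      (lpEval p z * lpD q z + lpD p z * lpEval q z) z := by
    have h := ((hasDerivAt_lpEval p hz).mul (hasDerivAt_lpEval q hz))
    rw [add_comm] at h
    apply h.congr_of_eventuallyEq
    filter_upwards [IsOpen.mem_nhds isOpen_ne hz] with w hw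
    exact lpEval_mul hw p q
  exact h1.unique h2

lemma sphere_ne_zero {z : ℂ} (hz : z ∈ Metric.sphere (0 : ℂ) 1) : z ≠ 0 := by
  intro h
  rw [Metric.mem_sphere, h] at hz
  simp at hz

lemma continuousOn_lpEval (p : LaurentPolynomial ℂ) :
    ContinuousOn (lpEval p) (Metric.sphere (0 : ℂ) 1) := fun z hz =>
  ((hasDerivAt_lpEval p (sphere_ne_zero hz)).differentiableAt.continuousAt).continuousWithinAt

lemma continuousOn_lpD (p : LaurentPolynomial ℂ) :
    ContinuousOn (lpD p) (Metric.sphere (0 : ℂ) 1) := by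
  have : ContinuousOn (fun w => ∑ k ∈ p.coeff.support, p.coeff k * ((k : ℂ) * w ^ (k - 1)))
      (Metric.sphere (0 : ℂ) 1) := by
    apply continuousOn_finset_sum
    intro k _
    exact continuousOn_const.mul (continuousOn_const.mul
      (continuousOn_id.zpow₀ _ fun z hz => Or.inl (sphere_ne_zero hz)))
  exact this

lemma circleIntegrable_of_continuousOn {f : ℂ → ℂ}
    (hf : ContinuousOn f (Metric.sphere (0 : ℂ) 1)) : CircleIntegrable f 0 1 :=
  ContinuousOn.circleIntegrable (by norm_num) hf

lemma circleIntegral_add {f g : ℂ → ℂ} (hf : CircleIntegrable f 0 1)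
    (hg : CircleIntegrable g 0 1) :
    (∮ z in C(0, 1), (f z + g z)) = (∮ z in C(0, 1), f z) + ∮ z in C(0, 1), g z := by
  simp only [circleIntegral, smul_add, intervalIntegral.integral_add hf.out hg.out]

lemma circleIntegral_lpD (p : LaurentPolynomial ℂ) :
    (∮ z in C(0, 1), lpD p z) = 0 := by
  have heq : Set.EqOn (lpD p) (fun z => ∑ k ∈ p.coeff.support, p.coeff k * ((k : ℂ) * z ^ (k - 1)))
      (Metric.sphere (0 : ℂ) 1) := fun z _ => rfl
  rw [circleIntegral.integral_congr (by norm_num) heq]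
  have hsplit : (∮ z in C(0, 1), ∑ k ∈ p.coeff.support, p.coeff k * ((k : ℂ) * z ^ (k - 1)))
      = ∑ k ∈ p.coeff.support, ∮ z in C(0, 1), p.coeff k * ((k : ℂ) * z ^ (k - 1)) := by
    simp only [circleIntegral, Finset.smul_sum]
    apply intervalIntegral.integral_finset_sum
    intro k _
    exact (circleIntegrable_of_continuousOn (continuousOn_const.mul
      (continuousOn_const.mul
        (continuousOn_id.zpow₀ _ fun z hz => Or.inl (sphere_ne_zero hz))))).out
  rw [hsplit]
  apply Finset.sum_eq_zero
  intro k _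
  rcases eq_or_ne k 0 with rfl | hk
  · simp [circleIntegral]
  · have h1 : (∮ z in C(0, 1), p.coeff k * ((k : ℂ) * z ^ (k - 1)))
        = (p.coeff k * (k : ℂ)) * ∮ z in C(0, 1), z ^ (k - 1) := by
      rw [← circleIntegral.integral_const_mul]
      apply circleIntegral.integral_congr (by norm_num)
      intro z _
      ring
    have h2 : (∮ z in C(0, 1), z ^ (k - 1)) = 0 := by
      have := circleIntegral.integral_sub_zpow_of_ne (n := k - 1) (c := (0 : ℂ)) (R := 1)
        (by intro h; exact hk (by omega)) 0
      simpa using this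
    rw [h1, h2, mul_zero]

/-- The key invariance predicate. -/
def Good (L A : LaurentPolynomial ℂ) : Prop :=
  ∀ i : ℕ, (∮ z in C(0, 1), lpEval L z ^ i * lpD A z) = 0

lemma lpEval_one (z : ℂ) : lpEval 1 z = 1 := by
  unfold lpEval
  rw [show AddMonoidAlgebra.coeff (1 : LaurentPolynomial ℂ) = Finsupp.single 0 1 from rfl,
    Finsupp.sum_single_index (by simp)]
  simp

lemma lpEval_pow {z : ℂ} (hz : z ≠ 0) (p : LaurentPolynomial ℂ) (n : ℕ) :
    lpEval (p ^ n) z = lpEval p z ^ n := by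
  induction n with
  | zero => simp [pow_zero, lpEval_one]
  | succ n ih => rw [pow_succ, lpEval_mul hz, ih, pow_succ]

lemma lpD_pow_succ {z : ℂ} (hz : z ≠ 0) (p : LaurentPolynomial ℂ) (n : ℕ) :
    lpD (p ^ (n + 1)) z = ((n : ℂ) + 1) * lpEval p z ^ n * lpD p z := by
  induction n with
  | zero => simp [pow_one]
  | succ n ih =>
    rw [pow_succ, lpD_mul hz, ih, lpEval_pow hz]
    push_cast
    ring

lemma good_add {L A B : LaurentPolynomial ℂ} (hA : Good L A) (hB : Good L B) :
    Good L (A + B) := by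
  intro i
  have heq : Set.EqOn (fun z => lpEval L z ^ i * lpD (A + B) z)
      (fun z => lpEval L z ^ i * lpD A z + lpEval L z ^ i * lpD B z)
      (Metric.sphere (0 : ℂ) 1) := by
    intro z _
    simp only [lpD_add]
    ring
  rw [circleIntegral.integral_congr (by norm_num) heq,
    circleIntegral_add (f := fun z => lpEval L z ^ i * lpD A z) (g := fun z => lpEval L z ^ i * lpD B z)
      (circleIntegrable_of_continuousOn (((continuousOn_lpEval L).pow i).mul (continuousOn_lpD A)))
      (circleIntegrable_of_continuousOn (((continuousOn_lpEval L).pow i).mul (continuousOn_lpD B))),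
    hA i, hB i, add_zero]

lemma good_smul {L A : LaurentPolynomial ℂ} (a : ℂ) (hA : Good L A) : Good L (a • A) := by
  intro i
  have heq : Set.EqOn (fun z => lpEval L z ^ i * lpD (a • A) z)
      (fun z => a * (lpEval L z ^ i * lpD A z)) (Metric.sphere (0 : ℂ) 1) := by
    intro z _
    simp only [lpD_smul]
    ring
  rw [circleIntegral.integral_congr (by norm_num) heq,
    circleIntegral.integral_const_mul, hA i, mul_zero]

lemma good_mul_L {L A : LaurentPolynomial ℂ} (hA : Good L A) : Good L (L * A) := by
  intro i
  set c : ℂ := ((i : ℂ) + 1)⁻¹ with hc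
  have hi : ((i : ℂ) + 1) ≠ 0 := Nat.cast_add_one_ne_zero i
  have heq : Set.EqOn (fun z => lpEval L z ^ i * lpD (L * A) z)
      (fun z => (1 - c) * (lpEval L z ^ (i + 1) * lpD A z) + c * lpD (L ^ (i + 1) * A) z)
      (Metric.sphere (0 : ℂ) 1) := by
    intro z hz
    have hz0 := sphere_ne_zero hz
    show lpEval L z ^ i * lpD (L * A) z = _
    simp only [lpD_mul hz0, lpD_pow_succ hz0, lpEval_pow hz0]
    rw [hc]
    field_simp
    ring
  rw [circleIntegral.integral_congr (by norm_num) heq,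
    circleIntegral_add (f := fun z => (1 - c) * (lpEval L z ^ (i + 1) * lpD A z))
      (g := fun z => c * lpD (L ^ (i + 1) * A) z)
      (circleIntegrable_of_continuousOn (continuousOn_const.mul
        (((continuousOn_lpEval L).pow (i + 1)).mul (continuousOn_lpD A))))
      (circleIntegrable_of_continuousOn (continuousOn_const.mul (continuousOn_lpD _)))]
  rw [circleIntegral.integral_const_mul, circleIntegral.integral_const_mul,
    hA (i + 1), circleIntegral_lpD, mul_zero, mul_zero, add_zero]

lemma good_congr_integral (L A : LaurentPolynomial ℂ) (i : ℕ) :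
    (∮ z in C(0, 1), lpEval L z ^ i * deriv (lpEval A) z)
      = ∮ z in C(0, 1), lpEval L z ^ i * lpD A z := by
  apply circleIntegral.integral_congr (by norm_num)
  intro z hz
  have : deriv (lpEval A) z = lpD A z := (hasDerivAt_lpEval A (sphere_ne_zero hz)).deriv
  simp only [this]

/-- If a Laurent polynomial `Q` satisfies `∮_{S¹} L(z)^i Q'(z) dz = 0` for all `i ≥ 0`,
then for any polynomial `R ∈ ℂ[z]` the Laurent polynomial `Q̂ = (R ∘ L) · Q` satisfies
`∮_{S¹} L(z)^i Q̂'(z) dz = 0` for all `i ≥ 0` as well. -/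
theorem stmt5 (L Q : LaurentPolynomial ℂ)
    (hQ : ∀ i : ℕ, (∮ z in C(0, 1), (lpEval L z) ^ i * deriv (lpEval Q) z) = 0)
    (R : Polynomial ℂ) :
    ∀ i : ℕ,
      (∮ z in C(0, 1),
        (lpEval L z) ^ i * deriv (lpEval (Polynomial.aeval L R * Q)) z) = 0 := by
  have hQ' : Good L Q := by
    intro i
    rw [← good_congr_integral]
    exact hQ i
  have main : Good L (Polynomial.aeval L R * Q) := by
    induction R using Polynomial.induction_on with
    | C a =>
      rw [Polynomial.aeval_C, ← Algebra.smul_def]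
      exact good_smul a hQ'
    | add p q hp hq =>
      rw [map_add, add_mul]
      exact good_add hp hq
    | monomial n a hmon =>
      have h : (Polynomial.aeval L) (Polynomial.C a * Polynomial.X ^ (n + 1)) * Q
          = L * ((Polynomial.aeval L) (Polynomial.C a * Polynomial.X ^ n) * Q) := by
        simp only [map_mul, map_pow, Polynomial.aeval_X, Polynomial.aeval_C, pow_succ]
        ring
      rw [h]
      exact good_mul_L hmon
  intro i
  rw [good_congr_integral]
  exact main i
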